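/- arXiv:2406.05470 — 2 statements merged into one kernel-verified Lean document; each statement's English description precedes it below -/
import Mathlib

section
/- Let K ⊂ ℝ^d be compact, let U be a compact subset of C(K), and let ϕ : ℝ → ℝ be a Lipschitz continuous function with sup_{t ∈ ℝ} |ϕ(t)| ≤ 1. Let p be a probability measure on ℝ^d that is (ϕ, K)-rich. Then for every ε > 0 and every δ ∈ (0,1) there exists N ∈ ℕ such that there is a measurable set E ⊆ (ℝ^d)^N with p^{⊗N}(E) ≥ 1 − δ, and for every (α_1, …, α_N) ∈ E there exist continuous maps c_1, …, c_N : U → ℝ such that for every f ∈ U, sup_{x ∈ K} | f(x) − ∑_{j=1}^N c_j(f) · ϕ( α_j · x ) | < ε. -/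
open scoped BigOperators RealInnerProductSpace
open MeasureTheory

lemma integrable_of_abs_le {Ω : Type*} [MeasurableSpace Ω] {μ : Measure Ω} [IsFiniteMeasure μ]
    {f : Ω → ℝ} (hf : AEStronglyMeasurable f μ) {C : ℝ} (h : ∀ x, |f x| ≤ C) :
    Integrable f μ :=
  ⟨hf, HasFiniteIntegral.of_bounded (C := C)
    (ae_of_all μ fun x => by simpa [Real.norm_eq_abs] using h x)⟩

lemma abs_integral_le {Ω : Type*} [MeasurableSpace Ω] {μ : Measure Ω} (f : Ω → ℝ) :
    |∫ x, f x ∂μ| ≤ ∫ x, |f x| ∂μ := by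
  simpa [Real.norm_eq_abs] using norm_integral_le_integral_norm (μ := μ) f

lemma chebyshev_pi {Ω : Type*} [MeasurableSpace Ω] (p : Measure Ω) [IsProbabilityMeasure p]
    {Y : Ω → ℝ} (hY : Measurable Y) {C : ℝ} (hbd : ∀ a, |Y a| ≤ C)
    (hmean : ∫ a, Y a ∂p = 0) (N : ℕ) {t : ℝ} (ht : 0 < t) :
    (Measure.pi fun _ : Fin N => p) {xs | t ≤ |∑ j, Y (xs j)|} ≤
      ENNReal.ofReal ((N : ℝ) * C ^ 2 / t ^ 2) := by
  classical
  have hne : Nonempty Ω := by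
    by_contra h
    have : IsEmpty Ω := not_nonempty_iff.mp h
    have h1 : (p Set.univ) = 1 := measure_univ
    rw [Set.univ_eq_empty_iff.mpr this, measure_empty] at h1
    exact zero_ne_one h1
  have hC0 : 0 ≤ C := le_trans (abs_nonneg _) (hbd (Classical.arbitrary Ω))
  set μ : Measure (Fin N → Ω) := Measure.pi fun _ : Fin N => p with hμdef
  haveI : IsProbabilityMeasure μ := by
    constructor
    rw [hμdef, ← Set.pi_univ Set.univ, Measure.pi_pi]
    simp
  set S : (Fin N → Ω) → ℝ := fun xs => ∑ j, Y (xs j) with hSdef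
  have hYj : ∀ j : Fin N, Measurable fun xs : Fin N → Ω => Y (xs j) :=
    fun j => hY.comp (measurable_pi_apply j)
  have hSmeas : Measurable S := Finset.measurable_sum _ fun j _ => hYj j
  -- integrability of products
  have hint2 : ∀ j k : Fin N, Integrable (fun xs => Y (xs j) * Y (xs k)) μ := by
    intro j k
    refine integrable_of_abs_le (((hYj j).mul (hYj k)).aestronglyMeasurable) (C := C * C) ?_
    intro xs
    rw [abs_mul]
    exact mul_le_mul (hbd _) (hbd _) (abs_nonneg _) hC0
  -- integral of each product term
  have hterm : ∀ j k : Fin N, ∫ xs, Y (xs j) * Y (xs k) ∂μ ≤ if j = k then C ^ 2 else 0 := by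
    intro j k
    by_cases hjk : j = k
    · subst hjk
      simp only [if_pos rfl]
      have hb : ∀ xs : Fin N → Ω, Y (xs j) * Y (xs j) ≤ C ^ 2 := by
        intro xs
        have : Y (xs j) * Y (xs j) = |Y (xs j)| * |Y (xs j)| := (abs_mul_abs_self _).symm
        rw [this, sq]
        exact mul_le_mul (hbd _) (hbd _) (abs_nonneg _) hC0
      calc ∫ xs, Y (xs j) * Y (xs j) ∂μ ≤ ∫ _, C ^ 2 ∂μ :=
            integral_mono (hint2 j j) (integrable_const _) hb
        _ = C ^ 2 := by simp
    · simp only [if_neg hjk]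
      letI : MeasureSpace Ω := ⟨p⟩
      have hvol : μ = (volume : Measure (Fin N → Ω)) := by
        rw [volume_pi]; rfl
      set g : Fin N → Ω → ℝ := fun i => if i = j then Y else if i = k then Y else fun _ => 1
        with hgdef
      have hprod : ∀ xs : Fin N → Ω, Y (xs j) * Y (xs k) = ∏ i, g i (xs i) := by
        intro xs
        have h1 : ∏ i ∈ ({j, k} : Finset (Fin N)), g i (xs i) = ∏ i, g i (xs i) :=
          Finset.prod_subset (Finset.subset_univ _) (by
            intro i _ hi
            simp only [Finset.mem_insert, Finset.mem_singleton, not_or] at hi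
            simp [hgdef, hi.1, hi.2])
        rw [← h1, Finset.prod_pair hjk]
        simp [hgdef, hjk]
      have hzero : (∫ ω, g j ω ∂p) = 0 := by simp [hgdef, hmean]
      have : ∫ xs, Y (xs j) * Y (xs k) ∂μ = ∏ i, ∫ ω, g i ω ∂p := by
        simp_rw [hprod]
        rw [hvol]
        exact MeasureTheory.integral_fintype_prod_eq_prod g
      rw [this]
      exact le_of_eq (Finset.prod_eq_zero (Finset.mem_univ j) hzero)
  -- bound on second moment
  have hZint : Integrable (fun xs => (S xs) ^ 2) μ := by
    have : (fun xs => (S xs) ^ 2) = fun xs => ∑ j, ∑ k, Y (xs j) * Y (xs k) := by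
      funext xs
      rw [sq, Finset.sum_mul_sum]
    rw [this]
    exact integrable_finset_sum _ fun j _ => integrable_finset_sum _ fun k _ => hint2 j k
  have key : ∫ xs, (S xs) ^ 2 ∂μ ≤ (N : ℝ) * C ^ 2 := by
    have h1 : ∫ xs, (S xs) ^ 2 ∂μ = ∑ j, ∑ k, ∫ xs, Y (xs j) * Y (xs k) ∂μ := by
      simp_rw [sq, hSdef, Finset.sum_mul_sum]
      rw [integral_finset_sum _ fun j _ => integrable_finset_sum _ fun k _ => hint2 j k]
      exact Finset.sum_congr rfl fun j _ => integral_finset_sum _ fun k _ => hint2 j k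
    rw [h1]
    calc ∑ j, ∑ k, ∫ xs, Y (xs j) * Y (xs k) ∂μ
        ≤ ∑ j : Fin N, ∑ k : Fin N, (if j = k then C ^ 2 else 0) :=
          Finset.sum_le_sum fun j _ => Finset.sum_le_sum fun k _ => hterm j k
      _ = (N : ℝ) * C ^ 2 := by
          simp [Finset.sum_ite_eq, Finset.card_univ]
  -- Markov
  have hsetEq : {xs : Fin N → Ω | t ≤ |S xs|} = {xs | t ^ 2 ≤ (S xs) ^ 2} := by
    ext xs
    simp only [Set.mem_setOf_eq]
    rw [← sq_abs (S xs)]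
    exact (pow_le_pow_iff_left₀ ht.le (abs_nonneg _) two_ne_zero).symm
  have markov := mul_meas_ge_le_integral_of_nonneg
    (ae_of_all μ fun xs => sq_nonneg (S xs)) hZint (t ^ 2)
  have hfin : μ {xs | t ≤ |S xs|} ≠ ⊤ := measure_ne_top μ _
  have htoReal : (μ {xs | t ≤ |S xs|}).toReal ≤ (N : ℝ) * C ^ 2 / t ^ 2 := by
    rw [le_div_iff₀ (by positivity : (0:ℝ) < t ^ 2)]
    calc (μ {xs | t ≤ |S xs|}).toReal * t ^ 2
        = t ^ 2 * (μ {xs | t ^ 2 ≤ (S xs) ^ 2}).toReal := by rw [← hsetEq]; ring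
      _ ≤ ∫ xs, (S xs) ^ 2 ∂μ := markov
      _ ≤ (N : ℝ) * C ^ 2 := key
  calc μ {xs | t ≤ |S xs|} = ENNReal.ofReal (μ {xs | t ≤ |S xs|}).toReal :=
        (ENNReal.ofReal_toReal hfin).symm
    _ ≤ ENNReal.ofReal ((N : ℝ) * C ^ 2 / t ^ 2) := ENNReal.ofReal_le_ofReal htoReal

lemma monteCarlo {d : ℕ} (p : Measure (EuclideanSpace ℝ (Fin d))) [IsProbabilityMeasure p]
    (K : Set (EuclideanSpace ℝ (Fin d))) (hK : IsCompact K)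
    (ϕ : ℝ → ℝ) (L : NNReal) (hL : LipschitzWith L ϕ) (hϕ : ∀ t : ℝ, |ϕ t| ≤ 1)
    {ι : Type*} [Fintype ι] (B : ι → EuclideanSpace ℝ (Fin d) → ℝ)
    (hBm : ∀ i, Measurable (B i)) (C : ℝ) (hC0 : 0 ≤ C) (hC : ∀ i α, |B i α| ≤ C)
    (η δ' : ℝ) (hη : 0 < η) (hδ' : 0 < δ') :
    ∃ N : ℕ, 0 < N ∧ ∃ E : Set (Fin N → EuclideanSpace ℝ (Fin d)), MeasurableSet E ∧
      ENNReal.ofReal (1 - δ') ≤ (Measure.pi fun _ : Fin N => p) E ∧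
      ∃ B' : ι → EuclideanSpace ℝ (Fin d) → ℝ,
        ∀ αs ∈ E, ∀ i, ∀ x ∈ K,
          |(∫ α, B i α * ϕ ⟪α, x⟫ ∂p) -
            ∑ j, (B' i (αs j) / (N : ℝ)) * ϕ ⟪αs j, x⟫| < η := by
  classical
  have hϕcont : Continuous ϕ := hL.continuous
  have hfeat : ∀ x : EuclideanSpace ℝ (Fin d),
      Measurable fun α : EuclideanSpace ℝ (Fin d) => ϕ ⟪α, x⟫ :=
    fun x => hϕcont.measurable.comp (continuous_id.inner continuous_const).measurable
  -- tail truncation radius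
  set τ : ℝ := η / (4 * (C + 1)) with hτdef
  have hτpos : 0 < τ := by
    have : (0:ℝ) < 4 * (C + 1) := by linarith
    exact div_pos hη this
  have hTmeas : ∀ n : ℕ, MeasurableSet {α : EuclideanSpace ℝ (Fin d) | (n : ℝ) < ‖α‖} :=
    fun n => (isOpen_lt continuous_const continuous_norm).measurableSet
  have hTanti : Antitone fun n : ℕ => {α : EuclideanSpace ℝ (Fin d) | (n : ℝ) < ‖α‖} := by
    intro m n hmn α hα
    have hc : (m : ℝ) ≤ (n : ℝ) := Nat.cast_le.mpr hmn
    exact lt_of_le_of_lt hc hα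
  have hTempty : (⋂ n : ℕ, {α : EuclideanSpace ℝ (Fin d) | (n : ℝ) < ‖α‖}) = ∅ := by
    apply Set.eq_empty_iff_forall_notMem.mpr
    intro α hα
    rw [Set.mem_iInter] at hα
    obtain ⟨n, hn⟩ := exists_nat_gt ‖α‖
    exact absurd (hα n) (not_lt.mpr hn.le)
  have htendsto := tendsto_measure_iInter_atTop (μ := p)
    (fun n => (hTmeas n).nullMeasurableSet) hTanti ⟨0, measure_ne_top p _⟩
  rw [hTempty, measure_empty] at htendsto
  have hevent : ∀ᶠ n : ℕ in Filter.atTop,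
      (p ∘ fun n : ℕ => {α : EuclideanSpace ℝ (Fin d) | (n : ℝ) < ‖α‖}) n
        < ENNReal.ofReal τ :=
    htendsto.eventually_lt_const (ENNReal.ofReal_pos.mpr hτpos)
  obtain ⟨R, hR⟩ := hevent.exists
  simp only [Function.comp] at hR
  have htail : (p {α : EuclideanSpace ℝ (Fin d) | (R : ℝ) < ‖α‖}).toReal ≤ τ :=
    ENNReal.toReal_le_of_le_ofReal hτpos.le hR.le
  -- truncated coefficients
  set B' : ι → EuclideanSpace ℝ (Fin d) → ℝ :=
    fun i α => if ‖α‖ ≤ (R : ℝ) then B i α else 0 with hB'def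
  have hB'm : ∀ i, Measurable (B' i) := fun i =>
    Measurable.ite (isClosed_le continuous_norm continuous_const).measurableSet
      (hBm i) measurable_const
  have hB'bd : ∀ i α, |B' i α| ≤ C := by
    intro i α
    by_cases h : ‖α‖ ≤ (R : ℝ) <;> simp [hB'def, h, hC i α, hC0]
  -- feature functions
  set F : ι → EuclideanSpace ℝ (Fin d) → EuclideanSpace ℝ (Fin d) → ℝ :=
    fun i α x => B' i α * ϕ ⟪α, x⟫ with hFdef
  have hFbd : ∀ i α x, |F i α x| ≤ C := by
    intro i α x
    rw [hFdef]
    calc |B' i α * ϕ ⟪α, x⟫| = |B' i α| * |ϕ ⟪α, x⟫| := abs_mul _ _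
      _ ≤ C * 1 := mul_le_mul (hB'bd i α) (hϕ _) (abs_nonneg _) hC0
      _ = C := mul_one C
  have hint1 : ∀ i x, Integrable (fun α => B i α * ϕ ⟪α, x⟫) p := by
    intro i x
    refine integrable_of_abs_le (((hBm i).mul (hfeat x)).aestronglyMeasurable) (C := C) ?_
    intro α
    calc |B i α * ϕ ⟪α, x⟫| = |B i α| * |ϕ ⟪α, x⟫| := abs_mul _ _
      _ ≤ C * 1 := mul_le_mul (hC i α) (hϕ _) (abs_nonneg _) hC0
      _ = C := mul_one C
  have hFmeas : ∀ i x, Measurable (fun α => F i α x) := fun i x => (hB'm i).mul (hfeat x)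
  have hint2 : ∀ i x, Integrable (fun α => F i α x) p := fun i x =>
    integrable_of_abs_le ((hFmeas i x).aestronglyMeasurable) (fun α => hFbd i α x)
  -- true and truncated means
  set Tg : ι → EuclideanSpace ℝ (Fin d) → ℝ := fun i x => ∫ α, B i α * ϕ ⟪α, x⟫ ∂p with hTgdef
  set Itr : ι → EuclideanSpace ℝ (Fin d) → ℝ := fun i x => ∫ α, F i α x ∂p with hItrdef
  have hItrbd : ∀ i x, |Itr i x| ≤ C := by
    intro i x
    rw [hItrdef]
    calc |∫ α, F i α x ∂p| ≤ ∫ α, |F i α x| ∂p := abs_integral_le _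
      _ ≤ ∫ _, C ∂p := integral_mono ((hint2 i x).abs) (integrable_const _)
          (fun α => hFbd i α x)
      _ = C := by simp
  -- tail estimate
  have hCτ : C * τ ≤ η / 4 := by
    rw [hτdef, mul_div_assoc']
    rw [div_le_div_iff₀ (by linarith) (by norm_num)]
    nlinarith [hη.le, hC0]
  have htailest : ∀ i x, |Tg i x - Itr i x| ≤ η / 4 := by
    intro i x
    have hdiff : Tg i x - Itr i x = ∫ α, (B i α - B' i α) * ϕ ⟪α, x⟫ ∂p := by
      rw [hTgdef, hItrdef, ← integral_sub (hint1 i x) (hint2 i x)]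
      congr 1
      funext α
      rw [hFdef]
      ring
    have hptw : ∀ α, |(B i α - B' i α) * ϕ ⟪α, x⟫| ≤
        Set.indicator {α : EuclideanSpace ℝ (Fin d) | (R:ℝ) < ‖α‖} (fun _ => C) α := by
      intro α
      by_cases h : ‖α‖ ≤ (R : ℝ)
      · have h0 : B i α - B' i α = 0 := by simp [hB'def, h]
        rw [h0, zero_mul, abs_zero]
        exact Set.indicator_nonneg (fun _ _ => hC0) α
      · have hmem : α ∈ {α : EuclideanSpace ℝ (Fin d) | (R:ℝ) < ‖α‖} := not_le.mp h
        rw [Set.indicator_of_mem hmem]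
        have h0 : B' i α = 0 := by simp [hB'def, h]
        rw [h0, sub_zero]
        calc |B i α * ϕ ⟪α, x⟫| = |B i α| * |ϕ ⟪α, x⟫| := abs_mul _ _
          _ ≤ C * 1 := mul_le_mul (hC i α) (hϕ _) (abs_nonneg _) hC0
          _ = C := mul_one C
    have hintsub : Integrable (fun α => (B i α - B' i α) * ϕ ⟪α, x⟫) p := by
      have : (fun α => (B i α - B' i α) * ϕ ⟪α, x⟫)
          = fun α => B i α * ϕ ⟪α, x⟫ - F i α x := by
        funext α; rw [hFdef]; ring
      rw [this]
      exact (hint1 i x).sub (hint2 i x)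
    calc |Tg i x - Itr i x| = |∫ α, (B i α - B' i α) * ϕ ⟪α, x⟫ ∂p| := by rw [hdiff]
      _ ≤ ∫ α, |(B i α - B' i α) * ϕ ⟪α, x⟫| ∂p := abs_integral_le _
      _ ≤ ∫ α, Set.indicator {α : EuclideanSpace ℝ (Fin d) | (R:ℝ) < ‖α‖} (fun _ => C) α ∂p :=
          integral_mono hintsub.abs ((integrable_const C).indicator (hTmeas R)) hptw
      _ = (p {α : EuclideanSpace ℝ (Fin d) | (R:ℝ) < ‖α‖}).toReal • C :=
          integral_indicator_const C (hTmeas R)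
      _ ≤ τ * C := by
          rw [smul_eq_mul]
          exact mul_le_mul_of_nonneg_right htail hC0
      _ = C * τ := mul_comm _ _
      _ ≤ η / 4 := hCτ
  -- Lipschitz constant
  set LR : ℝ := C * (L : ℝ) * R with hLRdef
  have hLR0 : 0 ≤ LR := by positivity
  have hFlip : ∀ i α x y, |F i α x - F i α y| ≤ LR * ‖x - y‖ := by
    intro i α x y
    by_cases h : ‖α‖ ≤ (R : ℝ)
    · have hsub : F i α x - F i α y = B' i α * (ϕ ⟪α, x⟫ - ϕ ⟪α, y⟫) := by rw [hFdef]; ring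
      rw [hsub, abs_mul]
      have hϕd : |ϕ ⟪α, x⟫ - ϕ ⟪α, y⟫| ≤ (L : ℝ) * |⟪α, x - y⟫| := by
        have := hL.dist_le_mul ⟪α, x⟫ ⟪α, y⟫
        rw [Real.dist_eq, Real.dist_eq] at this
        rwa [inner_sub_right]
      have hin : |⟪α, x - y⟫| ≤ ‖α‖ * ‖x - y‖ := abs_real_inner_le_norm α (x - y)
      calc |B' i α| * |ϕ ⟪α, x⟫ - ϕ ⟪α, y⟫| ≤ C * ((L : ℝ) * (‖α‖ * ‖x - y‖)) := by
            apply mul_le_mul (hB'bd i α) _ (abs_nonneg _) hC0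
            exact le_trans hϕd (mul_le_mul_of_nonneg_left hin L.coe_nonneg)
        _ ≤ C * ((L : ℝ) * ((R:ℝ) * ‖x - y‖)) := by
            apply mul_le_mul_of_nonneg_left _ hC0
            apply mul_le_mul_of_nonneg_left _ (by positivity)
            exact mul_le_mul_of_nonneg_right h (norm_nonneg _)
        _ = LR * ‖x - y‖ := by rw [hLRdef]; ring
    · have h0 : B' i α = 0 := by simp [hB'def, h]
      have hx0 : F i α x = 0 := by rw [hFdef]; simp [h0]
      have hy0 : F i α y = 0 := by rw [hFdef]; simp [h0]
      rw [hx0, hy0, sub_zero, abs_zero]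
      positivity

  have hItrlip : ∀ i x y, |Itr i x - Itr i y| ≤ LR * ‖x - y‖ := by
    intro i x y
    have hdiff : Itr i x - Itr i y = ∫ α, (F i α x - F i α y) ∂p := by
      rw [hItrdef, ← integral_sub (hint2 i x) (hint2 i y)]
    calc |Itr i x - Itr i y| = |∫ α, (F i α x - F i α y) ∂p| := by rw [hdiff]
      _ ≤ ∫ α, |F i α x - F i α y| ∂p := abs_integral_le _
      _ ≤ ∫ _, LR * ‖x - y‖ ∂p := integral_mono ((hint2 i x).sub (hint2 i y)).abs
            (integrable_const _) (fun α => hFlip i α x y)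
      _ = LR * ‖x - y‖ := by simp
  -- covering of K
  set r : ℝ := η / (8 * (LR + 1)) with hrdef
  have hrpos : 0 < r := div_pos hη (by linarith)
  have hLRr : LR * r ≤ η / 8 := by
    rw [hrdef, mul_div_assoc', div_le_div_iff₀ (by linarith) (by norm_num)]
    nlinarith [hη.le, hLR0]
  obtain ⟨t, htK, htfin, hcover⟩ := hK.finite_cover_balls hrpos
  set tF : Finset (EuclideanSpace ℝ (Fin d)) := htfin.toFinset with htFdef
  set m : ℕ := Fintype.card ι with hmdef
  set M : ℕ := tF.card with hMdef
  -- choice of N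
  obtain ⟨N, hNgt⟩ := exists_nat_gt
    (max 1 ((m : ℝ) * (M : ℝ) * 256 * C ^ 2 / (η ^ 2 * δ')))
  have hN1 : (1 : ℝ) < N := lt_of_le_of_lt (le_max_left _ _) hNgt
  have hNpos : 0 < N := by exact_mod_cast lt_trans zero_lt_one hN1
  have hNR : (0:ℝ) < N := by exact_mod_cast hNpos
  have hNbig : (m : ℝ) * (M : ℝ) * 256 * C ^ 2 / (η ^ 2 * δ') < N :=
    lt_of_le_of_lt (le_max_right _ _) hNgt
  refine ⟨N, hNpos, ?_⟩
  set μ : Measure (Fin N → EuclideanSpace ℝ (Fin d)) := Measure.pi fun _ => p with hμdef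
  haveI : IsProbabilityMeasure μ := by
    constructor
    rw [hμdef, ← Set.pi_univ Set.univ, Measure.pi_pi]
    simp
  -- empirical sums
  set G : ι → (Fin N → EuclideanSpace ℝ (Fin d)) → EuclideanSpace ℝ (Fin d) → ℝ :=
    fun i αs x => ∑ j, (B' i (αs j) / (N : ℝ)) * ϕ ⟪αs j, x⟫ with hGdef
  have hGmeas : ∀ i y, Measurable fun αs : Fin N → EuclideanSpace ℝ (Fin d) => G i αs y := by
    intro i y
    apply Finset.measurable_sum
    intro j _
    exact (((hB'm i).comp (measurable_pi_apply j)).div_const _).mul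
      ((hfeat y).comp (measurable_pi_apply j))
  -- the good event
  set E : Set (Fin N → EuclideanSpace ℝ (Fin d)) :=
    ⋂ i : ι, ⋂ y ∈ tF, {αs | |G i αs y - Itr i y| < η / 8} with hEdef
  have hEmeas : MeasurableSet E := by
    apply MeasurableSet.iInter
    intro i
    apply MeasurableSet.biInter tF.countable_toSet
    intro y _
    exact measurableSet_lt (((hGmeas i y).sub measurable_const).abs) measurable_const
  -- concentration for each (i, y)
  have hbad : ∀ i : ι, ∀ y ∈ tF,
      μ {αs | ¬ |G i αs y - Itr i y| < η / 8} ≤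
        ENNReal.ofReal ((N : ℝ) * (2 * C) ^ 2 / ((N : ℝ) * (η / 8)) ^ 2) := by
    intro i y _
    set Y : EuclideanSpace ℝ (Fin d) → ℝ := fun α => F i α y - Itr i y with hYdef
    have hYmeas : Measurable Y := (hFmeas i y).sub measurable_const
    have hYbd : ∀ α, |Y α| ≤ 2 * C := by
      intro α
      rw [hYdef]
      calc |F i α y - Itr i y| ≤ |F i α y| + |Itr i y| := abs_sub _ _
        _ ≤ C + C := add_le_add (hFbd i α y) (hItrbd i y)
        _ = 2 * C := by ring
    have hYmean : ∫ α, Y α ∂p = 0 := by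
      rw [hYdef, integral_sub (hint2 i y) (integrable_const _)]
      simp [hItrdef]
    have hseteq : {αs : Fin N → EuclideanSpace ℝ (Fin d) | ¬ |G i αs y - Itr i y| < η / 8}
        = {αs | (N : ℝ) * (η / 8) ≤ |∑ j, Y (αs j)|} := by
      ext αs
      simp only [Set.mem_setOf_eq, not_lt]
      have hsum : ∑ j, Y (αs j) = (N : ℝ) * (G i αs y - Itr i y) := by
        have hNG : (N : ℝ) * G i αs y = ∑ j, F i (αs j) y := by
          rw [hGdef, Finset.mul_sum]
          apply Finset.sum_congr rfl
          intro j _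
          rw [hFdef]
          field_simp
        simp only [hYdef]
        rw [Finset.sum_sub_distrib, ← hNG, Finset.sum_const, Finset.card_univ, Fintype.card_fin,
          nsmul_eq_mul]
        ring
      rw [hsum, abs_mul, abs_of_pos hNR]
      constructor
      · intro h
        exact mul_le_mul_of_nonneg_left h hNR.le
      · intro h
        exact le_of_mul_le_mul_left h hNR
    rw [hseteq, hμdef]
    exact chebyshev_pi p hYmeas hYbd hYmean N (by positivity)
  -- bound on the per-event probability sum
  have hperbound : (m : ℝ) * (M : ℝ) *
      ((N : ℝ) * (2 * C) ^ 2 / ((N : ℝ) * (η / 8)) ^ 2) ≤ δ' := by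
    have hq : (N : ℝ) * (2 * C) ^ 2 / ((N : ℝ) * (η / 8)) ^ 2
        = 256 * C ^ 2 / ((N : ℝ) * η ^ 2) := by
      field_simp
      ring
    rw [hq]
    rw [div_lt_iff₀ (by positivity)] at hNbig
    rw [mul_div_assoc', div_le_iff₀ (by positivity)]
    nlinarith [hNbig]
  -- measure of the bad set
  have hEc : μ Eᶜ ≤ ENNReal.ofReal δ' := by
    have hEc_sub : Eᶜ ⊆ ⋃ i : ι, ⋃ y ∈ tF, {αs | ¬ |G i αs y - Itr i y| < η / 8} := by
      intro αs hαs
      rw [hEdef] at hαs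
      simp only [Set.compl_iInter, Set.mem_iUnion] at hαs
      obtain ⟨i, y, hy, hmem⟩ := hαs
      refine Set.mem_iUnion.mpr ⟨i, Set.mem_iUnion₂.mpr ⟨y, hy, ?_⟩⟩
      simpa using hmem
    calc μ Eᶜ ≤ μ (⋃ i : ι, ⋃ y ∈ tF, {αs | ¬ |G i αs y - Itr i y| < η / 8}) :=
          measure_mono hEc_sub
      _ ≤ ∑' i : ι, μ (⋃ y ∈ tF, {αs | ¬ |G i αs y - Itr i y| < η / 8}) :=
          measure_iUnion_le _
      _ = ∑ i : ι, μ (⋃ y ∈ tF, {αs | ¬ |G i αs y - Itr i y| < η / 8}) := tsum_fintype _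
      _ ≤ ∑ i : ι, ∑ y ∈ tF, μ {αs | ¬ |G i αs y - Itr i y| < η / 8} :=
          Finset.sum_le_sum fun i _ => measure_biUnion_finset_le tF _
      _ ≤ ∑ i : ι, ∑ y ∈ tF,
            ENNReal.ofReal ((N : ℝ) * (2 * C) ^ 2 / ((N : ℝ) * (η / 8)) ^ 2) :=
          Finset.sum_le_sum fun i _ => Finset.sum_le_sum fun y hy => hbad i y hy
      _ = ENNReal.ofReal ((m : ℝ) * (M : ℝ) *
            ((N : ℝ) * (2 * C) ^ 2 / ((N : ℝ) * (η / 8)) ^ 2)) := by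
          rw [Finset.sum_const, Finset.sum_const, Finset.card_univ]
          rw [← hmdef, ← hMdef]
          rw [nsmul_eq_mul, nsmul_eq_mul, ← mul_assoc]
          rw [← ENNReal.ofReal_natCast m, ← ENNReal.ofReal_natCast M]
          rw [← ENNReal.ofReal_mul (Nat.cast_nonneg m),
            ← ENNReal.ofReal_mul (mul_nonneg (Nat.cast_nonneg m) (Nat.cast_nonneg M))]
      _ ≤ ENNReal.ofReal δ' := ENNReal.ofReal_le_ofReal hperbound
  refine ⟨E, hEmeas, ?_, ?_⟩
  · have hE1 : μ E = 1 - μ Eᶜ := by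
      have := prob_compl_eq_one_sub (μ := μ) hEmeas.compl
      rwa [compl_compl] at this
    rw [hE1]
    calc ENNReal.ofReal (1 - δ') = 1 - ENNReal.ofReal δ' := by
          rw [ENNReal.ofReal_sub 1 hδ'.le, ENNReal.ofReal_one]
      _ ≤ 1 - μ Eᶜ := tsub_le_tsub_left hEc 1
  · refine ⟨B', ?_⟩
    intro αs hαs i x hx
    -- pick a nearby center
    obtain ⟨y, hyt, hxy⟩ := Set.mem_iUnion₂.mp (hcover hx)
    have hytF : y ∈ tF := htfin.mem_toFinset.mpr hyt
    have hdxy : ‖x - y‖ < r := by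
      rw [← dist_eq_norm]
      exact Metric.mem_ball.mp hxy
    have hdyx : ‖y - x‖ < r := by rwa [norm_sub_rev]
    have hEprop : |G i αs y - Itr i y| < η / 8 := by
      rw [hEdef] at hαs
      simp only [Set.mem_iInter, Set.mem_setOf_eq] at hαs
      exact hαs i y hytF
    have hGlip : |G i αs x - G i αs y| ≤ LR * ‖x - y‖ := by
      have hterm : ∀ j : Fin N, |(B' i (αs j) / (N : ℝ)) * ϕ ⟪αs j, x⟫
          - (B' i (αs j) / (N : ℝ)) * ϕ ⟪αs j, y⟫| ≤ LR * ‖x - y‖ / N := by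
        intro j
        have heq : (B' i (αs j) / (N : ℝ)) * ϕ ⟪αs j, x⟫
            - (B' i (αs j) / (N : ℝ)) * ϕ ⟪αs j, y⟫
            = (F i (αs j) x - F i (αs j) y) / N := by
          rw [hFdef]; ring
        rw [heq, abs_div, abs_of_pos hNR]
        gcongr
        exact hFlip i (αs j) x y
      calc |G i αs x - G i αs y|
          = |∑ j, ((B' i (αs j) / (N : ℝ)) * ϕ ⟪αs j, x⟫
              - (B' i (αs j) / (N : ℝ)) * ϕ ⟪αs j, y⟫)| := by
            rw [hGdef, ← Finset.sum_sub_distrib]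
        _ ≤ ∑ j, |(B' i (αs j) / (N : ℝ)) * ϕ ⟪αs j, x⟫
              - (B' i (αs j) / (N : ℝ)) * ϕ ⟪αs j, y⟫| := Finset.abs_sum_le_sum_abs _ _
        _ ≤ ∑ _j : Fin N, LR * ‖x - y‖ / N := Finset.sum_le_sum fun j _ => hterm j
        _ = LR * ‖x - y‖ := by
            rw [Finset.sum_const, Finset.card_univ, Fintype.card_fin, nsmul_eq_mul]
            field_simp
    have h1 : |Tg i x - Itr i x| ≤ η / 4 := htailest i x
    have h2 : |Itr i x - Itr i y| ≤ η / 8 := le_trans (hItrlip i x y)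
      (le_trans (mul_le_mul_of_nonneg_left hdxy.le hLR0) hLRr)
    have h3 : |Itr i y - G i αs y| < η / 8 := by rw [abs_sub_comm]; exact hEprop
    have h4 : |G i αs y - G i αs x| ≤ η / 8 := by
      rw [abs_sub_comm]
      exact le_trans hGlip (le_trans (mul_le_mul_of_nonneg_left hdxy.le hLR0) hLRr)
    have t1 : |Tg i x - G i αs x| ≤ |Tg i x - Itr i y| + |Itr i y - G i αs x| :=
      abs_sub_le _ _ _
    have t2 : |Tg i x - Itr i y| ≤ |Tg i x - Itr i x| + |Itr i x - Itr i y| := abs_sub_le _ _ _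
    have t3 : |Itr i y - G i αs x| ≤ |Itr i y - G i αs y| + |G i αs y - G i αs x| :=
      abs_sub_le _ _ _
    show |Tg i x - G i αs x| < η
    linarith


def IsRich {q : ℕ} (ϕ : ℝ → ℝ) (V : Set (EuclideanSpace ℝ (Fin q)))
    (p : Measure (EuclideanSpace ℝ (Fin q))) : Prop :=
  ∃ g : EuclideanSpace ℝ (Fin q) → ℝ,
    Continuous g ∧ (∃ Cg : ℝ, ∀ x, |g x| ≤ Cg) ∧
    (∀ f : EuclideanSpace ℝ (Fin q) → ℝ, ContinuousOn f V → ∀ ε : ℝ, 0 < ε →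
      ∃ (N : ℕ) (w a : Fin N → ℝ) (b : Fin N → EuclideanSpace ℝ (Fin q)),
        ∀ x ∈ V, |f x - ∑ i, w i * g (a i • x + b i)| < ε) ∧
    (∀ (a : ℝ) (b : EuclideanSpace ℝ (Fin q)),
      ∃ β : EuclideanSpace ℝ (Fin q) → ℝ,
        Measurable β ∧ (∃ Cβ : ℝ, ∀ α, |β α| ≤ Cβ) ∧
        ∀ x ∈ V, g (a • x + b) = ∫ α, β α * ϕ ⟪α, x⟫ ∂p)

theorem random_feature_universal_approximation_of_functions
    (d : ℕ) (K : Set (EuclideanSpace ℝ (Fin d))) (hK : IsCompact K)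
    (U : Set C(K, ℝ)) (hU : IsCompact U)
    (ϕ : ℝ → ℝ) (hϕLip : ∃ L : NNReal, LipschitzWith L ϕ)
    (hϕbdd : ∀ t : ℝ, |ϕ t| ≤ 1)
    (p : Measure (EuclideanSpace ℝ (Fin d))) [IsProbabilityMeasure p]
    (hrich : IsRich ϕ K p)
    (ε : ℝ) (hε : 0 < ε) (δ : ℝ) (hδ : δ ∈ Set.Ioo (0 : ℝ) 1) :
    ∃ N : ℕ, ∃ E : Set (Fin N → EuclideanSpace ℝ (Fin d)),
      MeasurableSet E ∧
      ENNReal.ofReal (1 - δ) ≤ (Measure.pi fun _ : Fin N => p) E ∧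
      ∀ αs ∈ E, ∃ c : Fin N → U → ℝ,
        (∀ j, Continuous (c j)) ∧
        ∀ f : U, ∀ x : K,
          |(f : C(K, ℝ)) x - ∑ j, c j f * ϕ ⟪αs j, (x : EuclideanSpace ℝ (Fin d))⟫| < ε := by
  classical
  haveI : CompactSpace K := isCompact_iff_compactSpace.mp hK
  obtain ⟨L, hL⟩ := hϕLip
  obtain ⟨g, hgcont, ⟨Cg, hCg⟩, hdense, hrep⟩ := hrich
  have hϕcont : Continuous ϕ := hL.continuous
  have hfeat : ∀ x : EuclideanSpace ℝ (Fin d),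
      Measurable fun α : EuclideanSpace ℝ (Fin d) => ϕ ⟪α, x⟫ :=
    fun x => hϕcont.measurable.comp (continuous_id.inner continuous_const).measurable
  rcases Set.eq_empty_or_nonempty U with hUe | hUne
  · refine ⟨1, Set.univ, MeasurableSet.univ, ?_, ?_⟩
    · haveI : IsProbabilityMeasure (Measure.pi fun _ : Fin 1 => p) := by
        constructor
        rw [← Set.pi_univ Set.univ, Measure.pi_pi]
        simp
      rw [measure_univ]
      exact ENNReal.ofReal_le_one.mpr (by linarith [hδ.1])
    · intro αs _
      refine ⟨fun _ _ => 0, fun j => continuous_const, ?_⟩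
      intro f
      exact absurd f.2 (by simp [hUe])
  · -- nonempty case
    have hε6 : (0:ℝ) < ε / 6 := by linarith
    obtain ⟨t, htU, htfin, htcover⟩ := hU.finite_cover_balls (e := ε / 3) (by linarith)
    set tF : Finset C(K, ℝ) := htfin.toFinset with htFdef
    -- build integral representations for each net element
    have hBexists : ∀ i : {h : C(K, ℝ) // h ∈ tF},
        ∃ (Bi : EuclideanSpace ℝ (Fin d) → ℝ) (Ci : ℝ),
          Measurable Bi ∧ 0 ≤ Ci ∧ (∀ α, |Bi α| ≤ Ci) ∧
          ∀ x (hx : x ∈ K),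
            |(i : C(K, ℝ)) ⟨x, hx⟩ - ∫ α, Bi α * ϕ ⟪α, x⟫ ∂p| < ε / 6 := by
      intro i
      obtain ⟨Fc, hFc⟩ := ContinuousMap.exists_restrict_eq hK.isClosed (i : C(K, ℝ))
      obtain ⟨Nw, w, a, b, happrox⟩ := hdense Fc Fc.continuous.continuousOn (ε / 6) hε6
      choose β hβm hβbd hβrep using fun i' : Fin Nw => hrep (a i') (b i')
      choose Cβ hCβ using hβbd
      have hCβ0 : ∀ i', 0 ≤ Cβ i' := fun i' => le_trans (abs_nonneg _) (hCβ i' 0)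
      refine ⟨fun α => ∑ i', w i' * β i' α, ∑ i', |w i'| * Cβ i', ?_, ?_, ?_, ?_⟩
      · exact Finset.measurable_sum _ fun i' _ => (measurable_const.mul (hβm i'))
      · exact Finset.sum_nonneg fun i' _ => mul_nonneg (abs_nonneg _) (hCβ0 i')
      · intro α
        calc |∑ i', w i' * β i' α| ≤ ∑ i', |w i' * β i' α| := Finset.abs_sum_le_sum_abs _ _
          _ ≤ ∑ i', |w i'| * Cβ i' := by
              apply Finset.sum_le_sum
              intro i' _
              rw [abs_mul]
              exact mul_le_mul_of_nonneg_left (hCβ i' α) (abs_nonneg _)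
      · intro x hx
        have hint : ∀ i' : Fin Nw,
            Integrable (fun α => β i' α * ϕ ⟪α, x⟫) p := by
          intro i'
          refine integrable_of_abs_le (((hβm i').mul (hfeat x)).aestronglyMeasurable)
            (C := Cβ i') ?_
          intro α
          calc |β i' α * ϕ ⟪α, x⟫| = |β i' α| * |ϕ ⟪α, x⟫| := abs_mul _ _
            _ ≤ Cβ i' * 1 := mul_le_mul (hCβ i' α) (hϕbdd _) (abs_nonneg _) (hCβ0 i')
            _ = Cβ i' := mul_one _
        have hrepint : ∫ α, (∑ i', w i' * β i' α) * ϕ ⟪α, x⟫ ∂p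
            = ∑ i', w i' * g (a i' • x + b i') := by
          have heq : (fun α => (∑ i', w i' * β i' α) * ϕ ⟪α, x⟫)
              = fun α => ∑ i', w i' * (β i' α * ϕ ⟪α, x⟫) := by
            funext α
            rw [Finset.sum_mul]
            apply Finset.sum_congr rfl
            intro i' _
            ring
          rw [heq, integral_finset_sum _ fun i' _ => (hint i').const_mul (w i')]
          apply Finset.sum_congr rfl
          intro i' _
          rw [integral_const_mul, ← hβrep i' x hx]
        rw [hrepint]
        have hval : (i : C(K, ℝ)) ⟨x, hx⟩ = Fc x := by
          rw [← hFc]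
          rfl
        rw [hval]
        exact happrox x hx
    choose Bfun Cfun hBm hC0 hCbd happx using hBexists
    set Ctot : ℝ := ∑ i : {h : C(K, ℝ) // h ∈ tF}, Cfun i with hCtotdef
    have hCtot0 : 0 ≤ Ctot := Finset.sum_nonneg fun i _ => hC0 i
    have hCb : ∀ i α, |Bfun i α| ≤ Ctot := fun i α =>
      le_trans (hCbd i α) (Finset.single_le_sum (fun i _ => hC0 i) (Finset.mem_univ i))
    obtain ⟨N, hNpos, E, hEmeas, hEmeasure, B', hE⟩ :=
      monteCarlo p K hK ϕ L hL hϕbdd Bfun hBm Ctot hCtot0 hCb (ε / 3) δ (by linarith) hδ.1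
    refine ⟨N, E, hEmeas, hEmeasure, ?_⟩
    intro αs hαs
    -- partition of unity on U subordinate to the net
    set dfun : {h : C(K, ℝ) // h ∈ tF} → U → ℝ :=
      fun i f => max 0 (ε / 3 - dist (f : C(K, ℝ)) (i : C(K, ℝ))) with hdfundef
    have hdcont : ∀ i, Continuous (dfun i) := fun i =>
      continuous_const.max (continuous_const.sub (continuous_subtype_val.dist continuous_const))
    have hdnonneg : ∀ i f, 0 ≤ dfun i f := fun i f => le_max_left 0 _
    set Sf : U → ℝ := fun f => ∑ i, dfun i f with hSfdef
    have hScont : Continuous Sf := continuous_finset_sum _ fun i _ => hdcont i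
    have hSpos : ∀ f : U, 0 < Sf f := by
      intro f
      obtain ⟨y, hyt, hfy⟩ := Set.mem_iUnion₂.mp (htcover f.2)
      have hytF : y ∈ tF := htfin.mem_toFinset.mpr hyt
      apply Finset.sum_pos' (fun i _ => hdnonneg i f)
      refine ⟨⟨y, hytF⟩, Finset.mem_univ _, ?_⟩
      have hd : dist (f : C(K, ℝ)) y < ε / 3 := Metric.mem_ball.mp hfy
      exact lt_max_iff.mpr (Or.inr (by simpa using sub_pos.mpr hd))
    set lam : {h : C(K, ℝ) // h ∈ tF} → U → ℝ := fun i f => dfun i f / Sf f with hlamdef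
    have hlamcont : ∀ i, Continuous (lam i) :=
      fun i => (hdcont i).div hScont fun f => (hSpos f).ne'
    have hlamnn : ∀ i f, 0 ≤ lam i f := fun i f => div_nonneg (hdnonneg i f) (hSpos f).le
    have hlamsum : ∀ f, ∑ i, lam i f = 1 := by
      intro f
      simp only [hlamdef]
      rw [← Finset.sum_div]
      exact div_self (hSpos f).ne'
    have hlamsupp : ∀ i f, lam i f ≠ 0 → dist (f : C(K, ℝ)) (i : C(K, ℝ)) < ε / 3 := by
      intro i f h
      by_contra hd
      apply h
      simp only [hlamdef]
      have h0 : dfun i f = 0 := max_eq_left (by linarith [not_lt.mp hd])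
      rw [h0, zero_div]
    refine ⟨fun j f => ∑ i, lam i f * (B' i (αs j) / (N : ℝ)), ?_, ?_⟩
    · intro j
      exact continuous_finset_sum _ fun i _ => (hlamcont i).mul continuous_const
    · intro f x
      set Gi : {h : C(K, ℝ) // h ∈ tF} → ℝ :=
        fun i => ∑ j, (B' i (αs j) / (N : ℝ)) * ϕ ⟪αs j, (x : EuclideanSpace ℝ (Fin d))⟫
        with hGidef
      have hGi : ∀ i, lam i f ≠ 0 → |(f : C(K, ℝ)) x - Gi i| < 5 * ε / 6 := by
        intro i hi
        have hd := hlamsupp i f hi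
        have e1 : |(f : C(K, ℝ)) x - (i : C(K, ℝ)) x| < ε / 3 := by
          have h1 := ContinuousMap.dist_apply_le_dist (f := (f : C(K, ℝ)))
            (g := (i : C(K, ℝ))) x
          rw [Real.dist_eq] at h1
          exact lt_of_le_of_lt h1 hd
        have e2 : |(i : C(K, ℝ)) x -
            ∫ α, Bfun i α * ϕ ⟪α, (x : EuclideanSpace ℝ (Fin d))⟫ ∂p| < ε / 6 := by
          have := happx i (x : EuclideanSpace ℝ (Fin d)) x.2
          simpa using this
        have e3 : |(∫ α, Bfun i α * ϕ ⟪α, (x : EuclideanSpace ℝ (Fin d))⟫ ∂p) - Gi i| < ε / 3 :=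
          hE αs hαs i (x : EuclideanSpace ℝ (Fin d)) x.2
        have t1 := abs_sub_le ((f : C(K, ℝ)) x) ((i : C(K, ℝ)) x) (Gi i)
        have t2 := abs_sub_le ((i : C(K, ℝ)) x)
          (∫ α, Bfun i α * ϕ ⟪α, (x : EuclideanSpace ℝ (Fin d))⟫ ∂p) (Gi i)
        linarith
      have hsum : (f : C(K, ℝ)) x -
          ∑ j, (∑ i, lam i f * (B' i (αs j) / (N : ℝ))) *
            ϕ ⟪αs j, (x : EuclideanSpace ℝ (Fin d))⟫
          = ∑ i, lam i f * ((f : C(K, ℝ)) x - Gi i) := by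
        have h1 : ∑ j, (∑ i, lam i f * (B' i (αs j) / (N : ℝ))) *
              ϕ ⟪αs j, (x : EuclideanSpace ℝ (Fin d))⟫
            = ∑ i, lam i f * Gi i := by
          rw [hGidef]
          simp only [Finset.sum_mul, Finset.mul_sum]
          rw [Finset.sum_comm]
          apply Finset.sum_congr rfl
          intro i _
          apply Finset.sum_congr rfl
          intro j _
          ring
        rw [h1]
        simp only [mul_sub]
        rw [Finset.sum_sub_distrib, ← Finset.sum_mul, hlamsum f, one_mul]
      rw [hsum]
      calc |∑ i, lam i f * ((f : C(K, ℝ)) x - Gi i)|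
          ≤ ∑ i, |lam i f * ((f : C(K, ℝ)) x - Gi i)| := Finset.abs_sum_le_sum_abs _ _
        _ ≤ ∑ i, lam i f * (5 * ε / 6) := by
            apply Finset.sum_le_sum
            intro i _
            rw [abs_mul, abs_of_nonneg (hlamnn i f)]
            by_cases hi : lam i f = 0
            · rw [hi]; simp
            · exact mul_le_mul_of_nonneg_left (hGi i hi).le (hlamnn i f)
        _ = 5 * ε / 6 := by rw [← Finset.sum_mul, hlamsum f, one_mul]
        _ < ε := by linarith
end

section
/- Let K ⊂ ℝ^d be compact, let U be a compact subset of C(K), let F : U → ℝ be a continuous functional, and let ϕ : ℝ → ℝ be a Lipschitz continuous function with sup_{t ∈ ℝ} |ϕ(t)| ≤ 1. Suppose that for every m ∈ ℕ there is a probability measure p_m on ℝ^m that is (ϕ, V)-rich for every compact set V ⊂ ℝ^m. Then for every ε > 0 and every δ ∈ (0,1) there exist m, M ∈ ℕ and points x_1, …, x_m ∈ K such that there is a measurable set E ⊆ (ℝ^m)^M with p_m^{⊗M}(E) ≥ 1 − δ, and for every (α_1, …, α_M) ∈ E there exist weights w_1, …, w_M ∈ ℝ such that for every u ∈ U, | F(u)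 − ∑_{i=1}^M w_i · ϕ( α_i · (u(x_1), …, u(x_m)) ) | < ε. -/
open scoped BigOperators RealInnerProductSpace
open MeasureTheory

section Aux

lemma integrable_of_bdd {X : Type*} [MeasurableSpace X] {μ : Measure X} [IsFiniteMeasure μ]
    {f : X → ℝ} (hf : Measurable f) {C : ℝ} (hC : ∀ x, |f x| ≤ C) : Integrable f μ :=
  (integrable_const C).mono' hf.aestronglyMeasurable
    (Filter.Eventually.of_forall fun x => by simpa [Real.norm_eq_abs] using hC x)

lemma pi_integral_prod {q : ℕ} (μ : Measure (EuclideanSpace ℝ (Fin q))) [IsProbabilityMeasure μ]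
    {M : ℕ} (f : Fin M → EuclideanSpace ℝ (Fin q) → ℝ) :
    ∫ x : Fin M → EuclideanSpace ℝ (Fin q), ∏ i, f i (x i) ∂(Measure.pi fun _ => μ)
      = ∏ i, ∫ y, f i y ∂μ := by
  letI : MeasureSpace (EuclideanSpace ℝ (Fin q)) := ⟨μ⟩
  have : (Measure.pi fun _ : Fin M => μ)
      = (volume : Measure (Fin M → EuclideanSpace ℝ (Fin q))) := rfl
  rw [this]
  exact MeasureTheory.integral_fin_nat_prod_eq_prod f

lemma prod_two_aux {M : ℕ} {i j : Fin M} (hij : i ≠ j) (F G : Fin M → ℝ) :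
    (∏ k, (if k = i then F k else if k = j then G k else 1)) = F i * G j := by
  classical
  rw [← Finset.mul_prod_erase Finset.univ _ (Finset.mem_univ i)]
  rw [← Finset.mul_prod_erase (Finset.univ.erase i) _
    (Finset.mem_erase.2 ⟨Ne.symm hij, Finset.mem_univ j⟩)]
  rw [if_pos rfl, if_neg hij.symm, if_pos rfl]
  have : ∀ k ∈ (Finset.univ.erase i).erase j,
      (if k = i then F k else if k = j then G k else 1) = 1 := by
    intro k hk
    simp only [Finset.mem_erase] at hk
    rw [if_neg hk.2.1, if_neg hk.1]
  rw [Finset.prod_congr rfl this, Finset.prod_const_one, mul_one]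

lemma pi_integral_single {q : ℕ} (μ : Measure (EuclideanSpace ℝ (Fin q))) [IsProbabilityMeasure μ]
    {M : ℕ} (i : Fin M) (f : EuclideanSpace ℝ (Fin q) → ℝ) :
    ∫ x : Fin M → EuclideanSpace ℝ (Fin q), f (x i) ∂(Measure.pi fun _ => μ)
      = ∫ y, f y ∂μ := by
  classical
  have h := pi_integral_prod μ (fun k (y : EuclideanSpace ℝ (Fin q)) => if k = i then f y else 1)
  simp only [Finset.prod_ite_eq', Finset.mem_univ, if_true] at h
  rw [h, Finset.prod_eq_single i]
  · simp
  · intro k _ hk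
    simp [hk, integral_const]
  · simp

lemma pi_integral_pair {q : ℕ} (μ : Measure (EuclideanSpace ℝ (Fin q))) [IsProbabilityMeasure μ]
    {M : ℕ} {i j : Fin M} (hij : i ≠ j) (f g : EuclideanSpace ℝ (Fin q) → ℝ) :
    ∫ x : Fin M → EuclideanSpace ℝ (Fin q), f (x i) * g (x j) ∂(Measure.pi fun _ => μ)
      = (∫ y, f y ∂μ) * ∫ y, g y ∂μ := by
  classical
  have h := pi_integral_prod μ
    (fun k (y : EuclideanSpace ℝ (Fin q)) => if k = i then f y else if k = j then g y else 1)
  have lhs : ∀ x : Fin M → EuclideanSpace ℝ (Fin q),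
      (∏ k, (if k = i then f (x k) else if k = j then g (x k) else 1)) = f (x i) * g (x j) :=
    fun x => prod_two_aux hij (fun k => f (x k)) (fun k => g (x k))
  simp only [lhs] at h
  rw [h]
  have rhs : ∀ k : Fin M, (∫ y, (if k = i then f y else if k = j then g y else 1) ∂μ)
      = (if k = i then ∫ y, f y ∂μ else if k = j then ∫ y, g y ∂μ else 1) := by
    intro k
    split_ifs with h1 h2
    · rfl
    · rfl
    · simp
  simp only [rhs]
  exact prod_two_aux hij (fun _ => ∫ y, f y ∂μ) (fun _ => ∫ y, g y ∂μ)

lemma chebyshev_pi_s10 {q : ℕ} (μ : Measure (EuclideanSpace ℝ (Fin q))) [IsProbabilityMeasure μ]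
    {M : ℕ} (hM : 0 < M) (f : EuclideanSpace ℝ (Fin q) → ℝ) (hf : Measurable f)
    {C : ℝ} (hC : ∀ x, |f x| ≤ C) {t : ℝ} (ht : 0 < t) :
    (Measure.pi fun _ : Fin M => μ) {αs | t ≤ |(∑ i, f (αs i)) / M - ∫ y, f y ∂μ|}
      ≤ ENNReal.ofReal ((2*C)^2 / (M * t^2)) := by
  set π := Measure.pi fun _ : Fin M => μ with hπ
  haveI : IsProbabilityMeasure π := by rw [hπ]; infer_instance
  set c := ∫ y, f y ∂μ with hc
  have hfint : Integrable f μ := integrable_of_bdd hf hC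
  have hcabs : |c| ≤ C := by
    have := norm_integral_le_of_norm_le_const (μ := μ) (f := f) (C := C)
      (Filter.Eventually.of_forall fun x => by simpa [Real.norm_eq_abs] using hC x)
    simpa [Real.norm_eq_abs, measure_univ] using this
  set f₀ : EuclideanSpace ℝ (Fin q) → ℝ := fun y => f y - c with hf₀
  have hf₀m : Measurable f₀ := hf.sub measurable_const
  have h2C : ∀ y, |f₀ y| ≤ 2 * C := by
    intro y
    calc |f y - c| ≤ |f y| + |c| := abs_sub _ _
    _ ≤ C + C := add_le_add (hC y) hcabs
    _ = 2 * C := by ring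
  have hC0 : 0 ≤ C := le_trans (abs_nonneg _) (hC 0)
  have hf₀int : ∫ y, f₀ y ∂μ = 0 := by
    rw [hf₀]
    rw [integral_sub hfint (integrable_const c)]
    simp [hc]
  set S : (Fin M → EuclideanSpace ℝ (Fin q)) → ℝ := fun αs => ∑ i, f₀ (αs i) with hS
  have hSm : Measurable S := by
    apply Finset.measurable_sum
    intro i _
    exact hf₀m.comp (measurable_pi_apply i)
  have hterm_m : ∀ i j : Fin M,
      Measurable (fun αs : Fin M → EuclideanSpace ℝ (Fin q) => f₀ (αs i) * f₀ (αs j)) :=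
    fun i j => (hf₀m.comp (measurable_pi_apply i)).mul (hf₀m.comp (measurable_pi_apply j))
  have hterm_bdd : ∀ (i j : Fin M) (αs : Fin M → EuclideanSpace ℝ (Fin q)),
      |f₀ (αs i) * f₀ (αs j)| ≤ (2*C)^2 := by
    intro i j αs
    rw [abs_mul, sq]
    exact mul_le_mul (h2C _) (h2C _) (abs_nonneg _) (by linarith)
  have hterm_int : ∀ i j : Fin M,
      Integrable (fun αs : Fin M → EuclideanSpace ℝ (Fin q) => f₀ (αs i) * f₀ (αs j)) π :=
    fun i j => integrable_of_bdd (hterm_m i j) (hterm_bdd i j)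
  -- second moment
  have hmoment : ∫ αs, (S αs)^2 ∂π ≤ M * (2*C)^2 := by
    have hexp : ∀ αs, (S αs)^2 = ∑ i, ∑ j, f₀ (αs i) * f₀ (αs j) := by
      intro αs
      rw [sq, hS, Finset.sum_mul_sum]
    calc ∫ αs, (S αs)^2 ∂π = ∑ i, ∑ j, ∫ αs, f₀ (αs i) * f₀ (αs j) ∂π := by
          simp_rw [hexp]
          rw [integral_finset_sum _ (fun i _ => integrable_finset_sum _ (fun j _ => hterm_int i j))]
          exact Finset.sum_congr rfl fun i _ => integral_finset_sum _ (fun j _ => hterm_int i j)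
      _ = ∑ i : Fin M, ∫ y, f₀ y * f₀ y ∂μ := by
          apply Finset.sum_congr rfl
          intro i _
          rw [Finset.sum_eq_single i]
          · exact pi_integral_single μ i (fun y => f₀ y * f₀ y)
          · intro j _ hj
            rw [pi_integral_pair μ (Ne.symm hj) f₀ f₀, hf₀int, mul_zero]
          · simp
      _ ≤ ∑ i : Fin M, (2*C)^2 := by
          apply Finset.sum_le_sum
          intro i _
          have hptwise : ∀ y, f₀ y * f₀ y ≤ (2*C)^2 := by
            intro y
            calc f₀ y * f₀ y = |f₀ y| * |f₀ y| := (abs_mul_abs_self _).symm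
              _ ≤ (2*C)*(2*C) := mul_le_mul (h2C y) (h2C y) (abs_nonneg _) (by linarith)
              _ = (2*C)^2 := by ring
          have hint2 : Integrable (fun y => f₀ y * f₀ y) μ := by
            apply integrable_of_bdd (hf₀m.mul hf₀m) (C := (2*C)^2)
            intro y
            rw [Pi.mul_apply, abs_mul]
            calc |f₀ y| * |f₀ y| ≤ (2*C)*(2*C) :=
                  mul_le_mul (h2C y) (h2C y) (abs_nonneg _) (by linarith)
              _ = (2*C)^2 := by ring
          calc ∫ y, f₀ y * f₀ y ∂μ ≤ ∫ (_ : EuclideanSpace ℝ (Fin q)), (2*C)^2 ∂μ :=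
                integral_mono hint2 (integrable_const _) hptwise
            _ = (2*C)^2 := by simp
      _ = M * (2*C)^2 := by simp [Finset.sum_const, Finset.card_univ]
  -- event identification
  have hset : {αs : Fin M → EuclideanSpace ℝ (Fin q) | t ≤ |(∑ i, f (αs i)) / M - c|}
      ⊆ {αs | ((M:ℝ)*t)^2 ≤ (S αs)^2} := by
    intro αs hα
    simp only [Set.mem_setOf_eq] at hα ⊢
    have hMpos : (0:ℝ) < M := Nat.cast_pos.2 hM
    have hSid : (∑ i, f (αs i)) / M - c = S αs / M := by
      rw [hS, eq_div_iff hMpos.ne', sub_mul, div_mul_cancel₀ _ hMpos.ne']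
      simp [hf₀, Finset.sum_sub_distrib, mul_comm]
    rw [hSid, abs_div, abs_of_pos hMpos, le_div_iff₀ hMpos] at hα
    calc ((M:ℝ)*t)^2 = (t * M)^2 := by ring
      _ ≤ |S αs|^2 := by
          exact pow_le_pow_left₀ (by positivity) hα 2
      _ = (S αs)^2 := sq_abs _
  -- Markov
  have hSbdd : ∀ αs, |S αs| ≤ M * (2*C) := by
    intro αs
    calc |S αs| ≤ ∑ i, |f₀ (αs i)| := Finset.abs_sum_le_sum_abs _ _
      _ ≤ ∑ _i : Fin M, 2*C := Finset.sum_le_sum fun i _ => h2C _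
      _ = M * (2*C) := by simp [Finset.sum_const, Finset.card_univ, nsmul_eq_mul]
  have hmarkov := mul_meas_ge_le_integral_of_nonneg
    (μ := π) (f := fun αs => (S αs)^2)
    (Filter.Eventually.of_forall fun αs => sq_nonneg _)
    (integrable_of_bdd (hSm.pow_const 2)
      (fun αs => by
        rw [abs_of_nonneg (sq_nonneg _), ← sq_abs]
        exact pow_le_pow_left₀ (abs_nonneg _) (hSbdd αs) 2)) (((M:ℝ)*t)^2)
  have hMt : (0:ℝ) < ((M:ℝ)*t)^2 := by
    have : (0:ℝ) < M := Nat.cast_pos.2 hM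
    positivity
  have hBfin : π {αs | ((M:ℝ)*t)^2 ≤ (S αs)^2} ≠ ⊤ := measure_ne_top _ _
  have h3 : (π {αs | ((M:ℝ)*t)^2 ≤ (S αs)^2}).toReal ≤ (M * (2*C)^2) / ((M:ℝ)*t)^2 := by
    rw [le_div_iff₀ hMt]
    calc (π {αs | ((M:ℝ)*t)^2 ≤ (S αs)^2}).toReal * ((M:ℝ)*t)^2
        = ((M:ℝ)*t)^2 * (π {αs | ((M:ℝ)*t)^2 ≤ (S αs)^2}).toReal := mul_comm _ _
      _ ≤ ∫ αs, (S αs)^2 ∂π := hmarkov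
      _ ≤ M * (2*C)^2 := hmoment
  have h4 : (M * (2*C)^2) / ((M:ℝ)*t)^2 = (2*C)^2/(M*t^2) := by
    have hM0 : (M:ℝ) ≠ 0 := Nat.cast_ne_zero.2 hM.ne'
    field_simp
  calc π {αs | t ≤ |(∑ i, f (αs i)) / M - c|}
      ≤ π {αs | ((M:ℝ)*t)^2 ≤ (S αs)^2} := measure_mono hset
    _ = ENNReal.ofReal ((π {αs | ((M:ℝ)*t)^2 ≤ (S αs)^2}).toReal) :=
        (ENNReal.ofReal_toReal hBfin).symm
    _ ≤ ENNReal.ofReal ((2*C)^2 / (M * t^2)) :=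
        ENNReal.ofReal_le_ofReal (h3.trans_eq h4)

lemma finite_point_approx (d : ℕ) (K : Set (EuclideanSpace ℝ (Fin d)))
    (U : Set C(K, ℝ)) (hU : IsCompact U) (F : U → ℝ) (hF : Continuous F)
    (ε₀ : ℝ) (hε₀ : 0 < ε₀) :
    ∃ (m : ℕ) (x : Fin m → K) (f : EuclideanSpace ℝ (Fin m) → ℝ), Continuous f ∧
      ∀ u : U, |F u - f ((WithLp.equiv 2 (Fin m → ℝ)).symm (fun j => (u : C(K, ℝ)) (x j)))| < ε₀ := by
  classical
  haveI : CompactSpace ↥U := isCompact_iff_compactSpace.mp hU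
  set evc : ↥K → C(↥U, ℝ) := fun y =>
    ⟨fun u => (u : C(K, ℝ)) y, (continuous_eval_const y).comp continuous_subtype_val⟩
    with hevc
  set A := Algebra.adjoin ℝ (Set.range evc) with hA
  have hsep : A.SeparatesPoints := by
    intro u v huv
    have h1 : (u : C(K, ℝ)) ≠ (v : C(K, ℝ)) := fun h => huv (Subtype.ext h)
    have h2 : ∃ y : ↥K, (u : C(K, ℝ)) y ≠ (v : C(K, ℝ)) y := by
      by_contra h
      push_neg at h
      exact h1 (ContinuousMap.ext h)
    obtain ⟨y, hy⟩ := h2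
    exact ⟨evc y, ⟨evc y, Algebra.subset_adjoin (Set.mem_range_self y), rfl⟩, hy⟩
  have htop := ContinuousMap.subalgebra_topologicalClosure_eq_top_of_separatesPoints A hsep
  set F' : C(↥U, ℝ) := ⟨F, hF⟩ with hF'
  have hFc : F' ∈ closure (A : Set C(↥U, ℝ)) := by
    have : F' ∈ A.topologicalClosure := by rw [htop]; trivial
    exact this
  obtain ⟨G, hGA, hGd⟩ := Metric.mem_closure_iff.mp hFc ε₀ hε₀
  have hfactor : ∀ G ∈ A, ∃ (s : Finset ↥K) (f : ((↥s) → ℝ) → ℝ), Continuous f ∧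
      ∀ u : ↥U, G u = f (fun y => (u : C(K, ℝ)) ↑y) := by
    intro G hG
    induction hG using Algebra.adjoin_induction with
    | mem g hg =>
      obtain ⟨y, rfl⟩ := hg
      exact ⟨{y}, fun v => v ⟨y, Finset.mem_singleton_self y⟩, continuous_apply _,
        fun u => rfl⟩
    | algebraMap r =>
      exact ⟨∅, fun _ => r, continuous_const, fun u => rfl⟩
    | add g₁ g₂ hg₁ hg₂ ih₁ ih₂ =>
      obtain ⟨s₁, f₁, hf₁, he₁⟩ := ih₁
      obtain ⟨s₂, f₂, hf₂, he₂⟩ := ih₂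
      refine ⟨s₁ ∪ s₂,
        fun v => f₁ (fun y => v ⟨↑y, Finset.mem_union_left s₂ y.2⟩) +
                 f₂ (fun y => v ⟨↑y, Finset.mem_union_right s₁ y.2⟩), ?_, ?_⟩
      · exact (hf₁.comp (continuous_pi fun y => continuous_apply _)).add
          (hf₂.comp (continuous_pi fun y => continuous_apply _))
      · intro u
        simp only [ContinuousMap.add_apply, he₁ u, he₂ u]
    | mul g₁ g₂ hg₁ hg₂ ih₁ ih₂ =>
      obtain ⟨s₁, f₁, hf₁, he₁⟩ := ih₁
      obtain ⟨s₂, f₂, hf₂, he₂⟩ := ih₂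
      refine ⟨s₁ ∪ s₂,
        fun v => f₁ (fun y => v ⟨↑y, Finset.mem_union_left s₂ y.2⟩) *
                 f₂ (fun y => v ⟨↑y, Finset.mem_union_right s₁ y.2⟩), ?_, ?_⟩
      · exact (hf₁.comp (continuous_pi fun y => continuous_apply _)).mul
          (hf₂.comp (continuous_pi fun y => continuous_apply _))
      · intro u
        simp only [ContinuousMap.mul_apply, he₁ u, he₂ u]
  obtain ⟨s, f, hfc, hfe⟩ := hfactor G hGA
  set m := s.card with hm
  set e := s.equivFin with he
  refine ⟨m, fun i => ↑(e.symm i), fun z => f (fun y => z (e y)),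
    hfc.comp (continuous_pi fun y => (continuous_apply _).comp (PiLp.continuous_ofLp 2 _)), ?_⟩
  intro u
  have hz : ∀ y : ↥s,
      ((WithLp.equiv 2 (Fin m → ℝ)).symm (fun j => (u : C(K, ℝ)) ↑(e.symm j))) (e y)
        = (u : C(K, ℝ)) ↑y := by
    intro y
    rw [WithLp.equiv_symm_apply, PiLp.toLp_apply, Equiv.symm_apply_apply]
  have : f (fun y => ((WithLp.equiv 2 (Fin m → ℝ)).symm
      (fun j => (u : C(K, ℝ)) ↑(e.symm j))) (e y)) = G u := by
    rw [hfe u]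
    congr 1
    funext y
    rw [hz y]
  show |F u - f fun y => ((WithLp.equiv 2 (Fin m → ℝ)).symm
      (fun j => (u : C(K, ℝ)) ↑(e.symm j))) (e y)| < ε₀
  rw [this]
  calc |F u - G u| = dist (F' u) (G u) := by rw [Real.dist_eq]; rfl
    _ ≤ dist F' G := ContinuousMap.dist_apply_le_dist u
    _ < ε₀ := hGd

end Aux

set_option maxHeartbeats 2000000 in
theorem random_feature_approximation_of_functionals
    (d : ℕ) (K : Set (EuclideanSpace ℝ (Fin d))) (hK : IsCompact K)
    (U : Set C(K, ℝ)) (hU : IsCompact U)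
    (F : U → ℝ) (hF : Continuous F)
    (ϕ : ℝ → ℝ) (hϕLip : ∃ L : NNReal, LipschitzWith L ϕ)
    (hϕbdd : ∀ t : ℝ, |ϕ t| ≤ 1)
    (p : ∀ m : ℕ, Measure (EuclideanSpace ℝ (Fin m)))
    (hp : ∀ m, IsProbabilityMeasure (p m))
    (hrich : ∀ (m : ℕ) (V : Set (EuclideanSpace ℝ (Fin m))), IsCompact V → IsRich ϕ V (p m))
    (ε : ℝ) (hε : 0 < ε) (δ : ℝ) (hδ : δ ∈ Set.Ioo (0 : ℝ) 1) :
    ∃ (m M : ℕ) (x : Fin m → K), ∃ E : Set (Fin M → EuclideanSpace ℝ (Fin m)),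
      MeasurableSet E ∧
      ENNReal.ofReal (1 - δ) ≤ (Measure.pi fun _ : Fin M => p m) E ∧
      ∀ αs ∈ E, ∃ w : Fin M → ℝ,
        ∀ u : U,
          |F u - ∑ i, w i *
            ϕ ⟪αs i, (WithLp.equiv 2 (Fin m → ℝ)).symm (fun j => (u : C(K, ℝ)) (x j))⟫| < ε := by
  classical
  obtain ⟨L₀, hLip⟩ := hϕLip
  have hϕm : Measurable ϕ := hLip.continuous.measurable
  set L : ℝ := max (L₀ : ℝ) 1 with hLdef
  have hL1 : (1:ℝ) ≤ L := le_max_right _ _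
  have hL0 : (0:ℝ) < L := lt_of_lt_of_le one_pos hL1
  have hLϕ : ∀ s t : ℝ, |ϕ s - ϕ t| ≤ L * |s - t| := by
    intro s t
    have h := hLip.dist_le_mul s t
    rw [Real.dist_eq, Real.dist_eq] at h
    calc |ϕ s - ϕ t| ≤ (L₀:ℝ) * |s - t| := h
      _ ≤ L * |s - t| := mul_le_mul_of_nonneg_right (le_max_left _ _) (abs_nonneg _)
  have hε8 : (0:ℝ) < ε/8 := by linarith
  obtain ⟨m, x, f, hfc, hfap⟩ := finite_point_approx d K U hU F hF (ε/8) hε8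
  haveI : IsProbabilityMeasure (p m) := hp m
  haveI : CompactSpace ↥U := isCompact_iff_compactSpace.mp hU
  set Ev : ↥U → EuclideanSpace ℝ (Fin m) :=
    fun u => (WithLp.equiv 2 (Fin m → ℝ)).symm (fun j => (u : C(K, ℝ)) (x j)) with hEvdef
  have hEvc : Continuous Ev := by
    apply (PiLp.continuous_toLp 2 (fun _ : Fin m => ℝ)).comp
    exact continuous_pi fun j =>
      (continuous_eval_const (x j)).comp continuous_subtype_val
  set V : Set (EuclideanSpace ℝ (Fin m)) := Set.range Ev with hVdef
  have hVcomp : IsCompact V := isCompact_range hEvc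
  obtain ⟨g, hgc, ⟨Cg, hCg⟩, hdense, hrepr⟩ := hrich m V hVcomp
  obtain ⟨N, w, a, b, hap⟩ := hdense f hfc.continuousOn (ε/8) hε8
  choose β hβm hβbdd hβe using hrepr
  choose Cβ hCβ using hβbdd
  set B : EuclideanSpace ℝ (Fin m) → ℝ := fun α => ∑ j, w j * β (a j) (b j) α with hBdef
  have hBm : Measurable B :=
    Finset.measurable_sum _ fun j _ => (hβm (a j) (b j)).const_mul (w j)
  set C : ℝ := max (∑ j, |w j| * Cβ (a j) (b j)) 1 with hCdef
  have hC1 : (1:ℝ) ≤ C := le_max_right _ _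
  have hC0 : (0:ℝ) < C := lt_of_lt_of_le one_pos hC1
  have hBC : ∀ α, |B α| ≤ C := by
    intro α
    calc |B α| ≤ ∑ j, |w j * β (a j) (b j) α| := Finset.abs_sum_le_sum_abs _ _
      _ ≤ ∑ j, |w j| * Cβ (a j) (b j) := by
          apply Finset.sum_le_sum; intro j _
          rw [abs_mul]
          exact mul_le_mul_of_nonneg_left (hCβ _ _ α) (abs_nonneg _)
      _ ≤ C := le_max_left _ _
  have hinm : ∀ z : EuclideanSpace ℝ (Fin m),
      Measurable fun α : EuclideanSpace ℝ (Fin m) => ϕ ⟪α, z⟫ :=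
    fun z => hϕm.comp (continuous_id.inner continuous_const).measurable
  -- exact integral representation on V
  have hIrep : ∀ z ∈ V,
      (∑ j, w j * g (a j • z + b j)) = ∫ α, B α * ϕ ⟪α, z⟫ ∂(p m) := by
    intro z hz
    have hint : ∀ j : Fin N,
        Integrable (fun α => β (a j) (b j) α * ϕ ⟪α, z⟫) (p m) := by
      intro j
      apply integrable_of_bdd ((hβm _ _).mul (hinm z)) (C := Cβ (a j) (b j))
      intro α
      rw [Pi.mul_apply, abs_mul]
      calc |β (a j) (b j) α| * |ϕ ⟪α, z⟫| ≤ Cβ (a j) (b j) * 1 :=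
            mul_le_mul (hCβ _ _ α) (hϕbdd _) (abs_nonneg _)
              (le_trans (abs_nonneg _) (hCβ _ _ α))
        _ = Cβ (a j) (b j) := mul_one _
    calc ∑ j, w j * g (a j • z + b j)
        = ∑ j, w j * ∫ α, β (a j) (b j) α * ϕ ⟪α, z⟫ ∂(p m) := by
          exact Finset.sum_congr rfl fun j _ => by rw [hβe (a j) (b j) z hz]
      _ = ∑ j, ∫ α, w j * (β (a j) (b j) α * ϕ ⟪α, z⟫) ∂(p m) := by
          exact Finset.sum_congr rfl fun j _ => (integral_const_mul (w j) _).symm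
      _ = ∫ α, ∑ j, w j * (β (a j) (b j) α * ϕ ⟪α, z⟫) ∂(p m) :=
          (integral_finset_sum _ fun j _ => ((hint j).const_mul (w j))).symm
      _ = ∫ α, B α * ϕ ⟪α, z⟫ ∂(p m) := by
          congr 1
          funext α
          rw [hBdef]
          simp only [Finset.sum_mul, mul_assoc]
  have hFI : ∀ u : ↥U, |F u - ∫ α, B α * ϕ ⟪α, Ev u⟫ ∂(p m)| < ε/4 := by
    intro u
    have h1 : |F u - f (Ev u)| < ε/8 := hfap u
    have h2 := hap (Ev u) (Set.mem_range_self u)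
    have h3 := hIrep (Ev u) (Set.mem_range_self u)
    rw [← h3]
    calc |F u - ∑ j, w j * g (a j • Ev u + b j)|
        ≤ |F u - f (Ev u)| + |f (Ev u) - ∑ j, w j * g (a j • Ev u + b j)| :=
          abs_sub_le _ _ _
      _ < ε/8 + ε/8 := add_lt_add h1 h2
      _ = ε/4 := by ring
  -- tail radius
  set η : ℝ := ε/(16*C) with hηdef
  have hη0 : 0 < η := by rw [hηdef]; positivity
  have hRex : ∃ R : ℝ, 1 ≤ R ∧ (p m) {α | R < ‖α‖} ≤ ENNReal.ofReal η := by
    have hmeas : ∀ n : ℕ, NullMeasurableSet {α : EuclideanSpace ℝ (Fin m) | (n:ℝ) < ‖α‖} (p m) :=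
      fun n => (measurableSet_lt measurable_const continuous_norm.measurable).nullMeasurableSet
    have hanti : Antitone fun n : ℕ => {α : EuclideanSpace ℝ (Fin m) | (n:ℝ) < ‖α‖} := by
      intro n n' hnn' α hα
      exact lt_of_le_of_lt (Nat.cast_le.mpr hnn' : (n:ℝ) ≤ (n':ℝ)) hα
    have hfin : ∃ n : ℕ, (p m) {α : EuclideanSpace ℝ (Fin m) | (n:ℝ) < ‖α‖} ≠ ⊤ :=
      ⟨0, measure_ne_top _ _⟩
    have htails := tendsto_measure_iInter_atTop hmeas hanti hfin
    have hempty : (⋂ n : ℕ, {α : EuclideanSpace ℝ (Fin m) | (n:ℝ) < ‖α‖}) = ∅ := by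
      ext α
      simp only [Set.mem_iInter, Set.mem_setOf_eq, Set.mem_empty_iff_false, iff_false, not_forall,
        not_lt]
      obtain ⟨n, hn⟩ := exists_nat_ge ‖α‖
      exact ⟨n, hn⟩
    rw [hempty, measure_empty] at htails
    have hpos : (0:ENNReal) < ENNReal.ofReal η := ENNReal.ofReal_pos.2 hη0
    obtain ⟨n, hn⟩ := (htails.eventually (gt_mem_nhds hpos)).exists
    refine ⟨max (n:ℝ) 1, le_max_right _ _, ?_⟩
    refine le_trans (measure_mono ?_) hn.le
    intro α hα
    simp only [Set.mem_setOf_eq] at hα ⊢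
    exact lt_of_le_of_lt (le_max_left _ _) hα
  obtain ⟨R, hR1, hRtail⟩ := hRex
  have hR0 : (0:ℝ) < R := lt_of_lt_of_le one_pos hR1
  set T : Set (EuclideanSpace ℝ (Fin m)) := {α | R < ‖α‖} with hTdef
  have hTm : MeasurableSet T := measurableSet_lt measurable_const continuous_norm.measurable
  set gT : EuclideanSpace ℝ (Fin m) → ℝ := fun α => if ‖α‖ ≤ R then 0 else 1 with hgTdef
  have hgTm : Measurable gT :=
    Measurable.ite (measurableSet_le continuous_norm.measurable measurable_const)
      measurable_const measurable_const
  have hgTb : ∀ α, |gT α| ≤ 1 := by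
    intro α; rw [hgTdef]; dsimp only; split_ifs <;> simp
  have hgT0 : ∀ α, 0 ≤ gT α := by
    intro α; rw [hgTdef]; dsimp only; split_ifs <;> norm_num
  have hgTint : ∫ α, gT α ∂(p m) ≤ η := by
    have hind : gT = T.indicator (fun _ => (1:ℝ)) := by
      funext α
      simp only [hgTdef, hTdef, Set.indicator_apply, Set.mem_setOf_eq]
      by_cases h : ‖α‖ ≤ R
      · rw [if_pos h, if_neg (not_lt.2 h)]
      · rw [if_neg h, if_pos (lt_of_not_ge h)]
    rw [hind, integral_indicator_const (1:ℝ) hTm, smul_eq_mul, mul_one]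
    exact ENNReal.toReal_le_of_le_ofReal hη0.le hRtail
  set fz : EuclideanSpace ℝ (Fin m) → EuclideanSpace ℝ (Fin m) → ℝ :=
    fun z α => if ‖α‖ ≤ R then B α * ϕ ⟪α, z⟫ else 0 with hfzdef
  have hfzm : ∀ z, Measurable (fz z) := fun z =>
    Measurable.ite (measurableSet_le continuous_norm.measurable measurable_const)
      (hBm.mul (hinm z)) measurable_const
  have hBϕb : ∀ (z α : EuclideanSpace ℝ (Fin m)), |B α * ϕ ⟪α, z⟫| ≤ C := by
    intro z α
    rw [abs_mul]
    calc |B α| * |ϕ ⟪α, z⟫| ≤ C * 1 :=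
          mul_le_mul (hBC α) (hϕbdd _) (abs_nonneg _) hC0.le
      _ = C := mul_one _
  have hfzb : ∀ z α, |fz z α| ≤ C := by
    intro z α
    rw [hfzdef]; dsimp only
    split_ifs
    · exact hBϕb z α
    · simpa using hC0.le
  have hremb : ∀ (z α : EuclideanSpace ℝ (Fin m)),
      |B α * ϕ ⟪α, z⟫ - fz z α| ≤ C * gT α := by
    intro z α
    rw [hfzdef, hgTdef]; dsimp only
    split_ifs
    · simp
    · rw [sub_zero, mul_one]; exact hBϕb z α
  have hfzlip : ∀ (z z' α : EuclideanSpace ℝ (Fin m)),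
      |fz z α - fz z' α| ≤ C * L * R * ‖z - z'‖ := by
    intro z z' α
    have hnn : (0:ℝ) ≤ C * L * R * ‖z - z'‖ := by positivity
    rw [hfzdef]; dsimp only
    split_ifs with h
    · rw [← mul_sub, abs_mul]
      calc |B α| * |ϕ ⟪α, z⟫ - ϕ ⟪α, z'⟫| ≤ C * (L * |⟪α, z⟫ - ⟪α, z'⟫|) := by
            apply mul_le_mul (hBC α) (hLϕ _ _) (abs_nonneg _) hC0.le
        _ = C * L * |⟪α, z - z'⟫| := by rw [← inner_sub_right]; ring
        _ ≤ C * L * (‖α‖ * ‖z - z'‖) := by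
            apply mul_le_mul_of_nonneg_left (abs_real_inner_le_norm _ _) (by positivity)
        _ ≤ C * L * (R * ‖z - z'‖) := by
            apply mul_le_mul_of_nonneg_left
              (mul_le_mul_of_nonneg_right h (norm_nonneg _)) (by positivity)
        _ = C * L * R * ‖z - z'‖ := by ring
    · simpa using hnn
  -- net
  set τ : ℝ := ε/(16*C*L*R) with hτdef
  have hτ0 : 0 < τ := by rw [hτdef]; positivity
  obtain ⟨net, hnetfin, hnetcov⟩ := Metric.totallyBounded_iff.mp hVcomp.totallyBounded τ hτ0
  set netF : Finset (EuclideanSpace ℝ (Fin m)) := hnetfin.toFinset with hnetFdef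
  -- choice of M
  set tc : ℝ := ε/8 with htcdef
  have htc0 : 0 < tc := hε8
  set r₁ : ℝ := ((netF.card : ℝ) * (2*C)^2 / tc^2) * (2/δ) with hr₁def
  set r₂ : ℝ := ((2*(1:ℝ))^2/η^2) * (2/δ) with hr₂def
  obtain ⟨n, hn⟩ := exists_nat_ge (max r₁ r₂)
  set M : ℕ := n + 1 with hMdef
  have hM0 : 0 < M := Nat.succ_pos n
  have hMr : max r₁ r₂ ≤ (M:ℝ) := hn.trans (by exact_mod_cast Nat.le_succ n)
  have hMpos : (0:ℝ) < (M:ℝ) := Nat.cast_pos.2 hM0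
  set π : Measure (Fin M → EuclideanSpace ℝ (Fin m)) := Measure.pi fun _ => p m with hπdef
  haveI : IsProbabilityMeasure π := by rw [hπdef]; infer_instance
  -- events
  set Bad : EuclideanSpace ℝ (Fin m) → Set (Fin M → EuclideanSpace ℝ (Fin m)) :=
    fun y => {αs | tc ≤ |(∑ i, fz y (αs i))/M - ∫ α, fz y α ∂(p m)|} with hBaddef
  set BadT : Set (Fin M → EuclideanSpace ℝ (Fin m)) :=
    {αs | η ≤ |(∑ i, gT (αs i))/M - ∫ α, gT α ∂(p m)|} with hBadTdef
  have hBadm : ∀ y, MeasurableSet (Bad y) := by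
    intro y
    apply measurableSet_le measurable_const
    apply Measurable.abs
    exact ((Finset.measurable_sum _ fun i _ =>
      (hfzm y).comp (measurable_pi_apply i)).div_const _).sub measurable_const
  have hBadTm : MeasurableSet BadT := by
    apply measurableSet_le measurable_const
    apply Measurable.abs
    exact ((Finset.measurable_sum _ fun i _ =>
      hgTm.comp (measurable_pi_apply i)).div_const _).sub measurable_const
  set E : Set (Fin M → EuclideanSpace ℝ (Fin m)) :=
    (⋂ y ∈ netF, (Bad y)ᶜ) ∩ BadTᶜ with hEdef
  have hEm : MeasurableSet E :=
    (MeasurableSet.biInter netF.countable_toSet fun y _ => (hBadm y).compl).inter hBadTm.compl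
  -- measure bound
  have hcheb1 : ∀ y, π (Bad y) ≤ ENNReal.ofReal ((2*C)^2/(M * tc^2)) := fun y =>
    chebyshev_pi_s10 (p m) hM0 (fz y) (hfzm y) (hfzb y) htc0
  have hchebT : π BadT ≤ ENNReal.ofReal ((2*1)^2/(M*η^2)) :=
    chebyshev_pi_s10 (p m) hM0 gT hgTm hgTb hη0
  have hEc : Eᶜ ⊆ (⋃ y ∈ netF, Bad y) ∪ BadT := by
    intro αs hαs
    rw [hEdef, Set.compl_inter, Set.compl_iInter] at hαs
    rcases hαs with h | h
    · left
      simp only [Set.mem_iUnion] at h ⊢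
      obtain ⟨y, hy⟩ := h
      rw [Set.compl_iInter] at hy
      simp only [Set.mem_iUnion, compl_compl] at hy
      obtain ⟨hyF, hmem⟩ := hy
      exact ⟨y, hyF, hmem⟩
    · right; rwa [compl_compl] at h
  have hδ0 : (0:ℝ) < δ := hδ.1
  have hδne : δ ≠ 0 := hδ0.ne'
  have hfac : (2/δ) * (δ/2) = 1 := by
    rw [div_mul_div_comm, mul_comm]
    exact div_self (by positivity)
  have harith1 : (netF.card : ℝ) * ((2*C)^2/((M:ℝ) * tc^2)) ≤ δ/2 := by
    have h1 : r₁ ≤ (M:ℝ) := le_trans (le_max_left _ _) hMr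
    have hA2 : (netF.card : ℝ) * ((2*C)^2/((M:ℝ) * tc^2))
        = ((netF.card : ℝ) * (2*C)^2 / tc^2) / (M:ℝ) := by
      rw [div_div, mul_div_assoc, mul_comm ((M:ℝ)) (tc^2)]
    rw [hA2, div_le_iff₀ hMpos]
    have h2 : ((netF.card : ℝ) * (2*C)^2 / tc^2)
        = r₁ * (δ/2) := by
      rw [hr₁def, mul_assoc, hfac]; ring
    rw [h2]
    calc r₁ * (δ/2) ≤ (M:ℝ) * (δ/2) :=
          mul_le_mul_of_nonneg_right h1 (by linarith)
      _ = δ/2 * (M:ℝ) := mul_comm _ _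
  have harith2 : (2*(1:ℝ))^2/((M:ℝ)*η^2) ≤ δ/2 := by
    have h1 : r₂ ≤ (M:ℝ) := le_trans (le_max_right _ _) hMr
    have hδ0 := hδ.1
    have hA2 : (2*(1:ℝ))^2/((M:ℝ) * η^2) = ((2*(1:ℝ))^2 / η^2) / (M:ℝ) := by
      rw [div_div, mul_comm ((M:ℝ)) (η^2)]
    rw [hA2, div_le_iff₀ hMpos]
    have h2 : ((2*(1:ℝ))^2 / η^2) = r₂ * (δ/2) := by
      rw [hr₂def, mul_assoc, hfac]; ring
    rw [h2]
    calc r₂ * (δ/2) ≤ (M:ℝ) * (δ/2) :=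
          mul_le_mul_of_nonneg_right h1 (by linarith)
      _ = δ/2 * (M:ℝ) := mul_comm _ _
  -- measure of the bad set
  have hbad : π Eᶜ ≤ ENNReal.ofReal δ := by
    calc π Eᶜ ≤ π ((⋃ y ∈ netF, Bad y) ∪ BadT) := measure_mono hEc
      _ ≤ π (⋃ y ∈ netF, Bad y) + π BadT := measure_union_le _ _
      _ ≤ (∑ y ∈ netF, π (Bad y)) + π BadT :=
          add_le_add (measure_biUnion_finset_le _ _) le_rfl
      _ ≤ (∑ _y ∈ netF, ENNReal.ofReal ((2*C)^2/((M:ℝ) * tc^2)))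
            + ENNReal.ofReal ((2*1)^2/((M:ℝ)*η^2)) :=
          add_le_add (Finset.sum_le_sum fun y _ => hcheb1 y) hchebT
      _ = (netF.card : ENNReal) * ENNReal.ofReal ((2*C)^2/((M:ℝ) * tc^2))
            + ENNReal.ofReal ((2*1)^2/((M:ℝ)*η^2)) := by
          rw [Finset.sum_const, nsmul_eq_mul]
      _ ≤ ENNReal.ofReal (δ/2) + ENNReal.ofReal (δ/2) := by
          apply add_le_add
          · rw [← ENNReal.ofReal_natCast netF.card,
              ← ENNReal.ofReal_mul (Nat.cast_nonneg _)]
            exact ENNReal.ofReal_le_ofReal harith1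
          · exact ENNReal.ofReal_le_ofReal (le_trans (le_of_eq (by norm_num)) harith2)
      _ = ENNReal.ofReal δ := by
          rw [← ENNReal.ofReal_add (by linarith) (by linarith)]
          norm_num
  have hδ1 : (0:ℝ) ≤ 1 - δ := by linarith [hδ.2]
  have hEmeas : ENNReal.ofReal (1-δ) ≤ π E := by
    have hone : ENNReal.ofReal (1-δ) + ENNReal.ofReal δ = 1 := by
      rw [← ENNReal.ofReal_add hδ1 hδ0.le]
      norm_num
    have h2 : π E = 1 - π Eᶜ := by
      conv_lhs => rw [← compl_compl E]
      exact prob_compl_eq_one_sub hEm.compl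
    rw [h2]
    refine ENNReal.le_sub_of_add_le_right (measure_ne_top _ _) ?_
    calc ENNReal.ofReal (1-δ) + π Eᶜ
        ≤ ENNReal.ofReal (1-δ) + ENNReal.ofReal δ := add_le_add le_rfl hbad
      _ = 1 := hone
  refine ⟨m, M, x, E, hEm, hEmeas, ?_⟩
  intro αs hαs
  refine ⟨fun i => B (αs i) / M, ?_⟩
  intro u
  set z : EuclideanSpace ℝ (Fin m) := Ev u with hzdef
  have hzV : z ∈ V := Set.mem_range_self u
  -- net point
  have hcov := hnetcov hzV
  rw [Set.mem_iUnion₂] at hcov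
  obtain ⟨y, hyn, hzy⟩ := hcov
  have hyF : y ∈ netF := hnetfin.mem_toFinset.2 hyn
  have hzynorm : ‖z - y‖ < τ := by
    rw [← dist_eq_norm]
    exact Metric.mem_ball.1 hzy
  -- good event facts
  have hgoodT : |(∑ i, gT (αs i))/(M:ℝ) - ∫ α, gT α ∂(p m)| < η := by
    have h := hαs.2
    simp only [hBadTdef, Set.mem_compl_iff, Set.mem_setOf_eq, not_le] at h
    exact h
  have hgood1 : |(∑ i, fz y (αs i))/(M:ℝ) - ∫ α, fz y α ∂(p m)| < tc := by
    have h := Set.mem_iInter₂.1 hαs.1 y hyF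
    simp only [hBaddef, Set.mem_compl_iff, Set.mem_setOf_eq, not_le] at h
    exact h
  -- integrability
  have hfzint : ∀ z', Integrable (fz z') (p m) := fun z' =>
    integrable_of_bdd (hfzm z') (hfzb z')
  have hgTint' : Integrable gT (p m) := integrable_of_bdd hgTm hgTb
  have hBϕint : Integrable (fun α => B α * ϕ ⟪α, z⟫) (p m) :=
    integrable_of_bdd (hBm.mul (hinm z)) (hBϕb z)
  -- abbreviations
  set Ifull : ℝ := ∫ α, B α * ϕ ⟪α, z⟫ ∂(p m) with hIfulldef
  set Ifz : ℝ := ∫ α, fz z α ∂(p m) with hIfzdef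
  set Ify : ℝ := ∫ α, fz y α ∂(p m) with hIfydef
  set Avgz : ℝ := (∑ i, fz z (αs i))/(M:ℝ) with hAvgzdef
  set Avgy : ℝ := (∑ i, fz y (αs i))/(M:ℝ) with hAvgydef
  set Sful : ℝ := (∑ i, B (αs i) * ϕ ⟪αs i, z⟫)/(M:ℝ) with hSfuldef
  set Q : ℝ := (∑ i, gT (αs i))/(M:ℝ) with hQdef
  -- t1 : |Ifull - Ifz| ≤ C * η
  have ht1 : |Ifull - Ifz| ≤ C * η := by
    rw [hIfulldef, hIfzdef, ← integral_sub hBϕint (hfzint z)]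
    calc |∫ α, (B α * ϕ ⟪α, z⟫ - fz z α) ∂(p m)|
        ≤ ∫ α, |B α * ϕ ⟪α, z⟫ - fz z α| ∂(p m) := by
          simpa [Real.norm_eq_abs] using
            norm_integral_le_integral_norm (μ := p m) (fun α => B α * ϕ ⟪α, z⟫ - fz z α)
      _ ≤ ∫ α, C * gT α ∂(p m) := by
          apply integral_mono (hBϕint.sub (hfzint z)).abs (hgTint'.const_mul C)
          intro α
          exact hremb z α
      _ = C * ∫ α, gT α ∂(p m) := integral_const_mul _ _
      _ ≤ C * η := mul_le_mul_of_nonneg_left hgTint hC0.le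
  -- t2 : |Ifz - Ify| ≤ C*L*R*τ
  have ht2 : |Ifz - Ify| ≤ C*L*R*τ := by
    rw [hIfzdef, hIfydef, ← integral_sub (hfzint z) (hfzint y)]
    have hb : ∀ α, ‖fz z α - fz y α‖ ≤ C*L*R*τ := by
      intro α
      rw [Real.norm_eq_abs]
      calc |fz z α - fz y α| ≤ C * L * R * ‖z - y‖ := hfzlip z y α
        _ ≤ C * L * R * τ := mul_le_mul_of_nonneg_left hzynorm.le (by positivity)
    have := norm_integral_le_of_norm_le_const (μ := p m)
      (f := fun α => fz z α - fz y α) (Filter.Eventually.of_forall hb)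
    simpa [Real.norm_eq_abs, measure_univ] using this
  -- t4 : |Avgy - Avgz| ≤ C*L*R*τ
  have ht4 : |Avgy - Avgz| ≤ C*L*R*τ := by
    rw [hAvgydef, hAvgzdef, div_sub_div_same, ← Finset.sum_sub_distrib, abs_div,
      abs_of_pos hMpos, div_le_iff₀ hMpos]
    calc |∑ i, (fz y (αs i) - fz z (αs i))|
        ≤ ∑ i, |fz y (αs i) - fz z (αs i)| := Finset.abs_sum_le_sum_abs _ _
      _ ≤ ∑ _i : Fin M, C*L*R*τ := by
          apply Finset.sum_le_sum
          intro i _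
          calc |fz y (αs i) - fz z (αs i)| ≤ C * L * R * ‖y - z‖ := hfzlip y z (αs i)
            _ ≤ C * L * R * τ := by
                rw [norm_sub_rev]
                exact mul_le_mul_of_nonneg_left hzynorm.le (by positivity)
      _ = C*L*R*τ * (M:ℝ) := by
          simp [Finset.sum_const, Finset.card_univ, nsmul_eq_mul]
          ring
  -- t5 : |Sful - Avgz| ≤ C * Q
  have ht5 : |Sful - Avgz| ≤ C * Q := by
    rw [hSfuldef, hAvgzdef, div_sub_div_same, ← Finset.sum_sub_distrib, hQdef, abs_div,
      abs_of_pos hMpos, div_le_iff₀ hMpos]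
    have hmc : C * ((∑ i, gT (αs i))/(M:ℝ)) * (M:ℝ) = ∑ i, C * gT (αs i) := by
      rw [mul_assoc, div_mul_cancel₀ _ hMpos.ne', Finset.mul_sum]
    rw [hmc]
    calc |∑ i, (B (αs i) * ϕ ⟪αs i, z⟫ - fz z (αs i))|
        ≤ ∑ i, |B (αs i) * ϕ ⟪αs i, z⟫ - fz z (αs i)| := Finset.abs_sum_le_sum_abs _ _
      _ ≤ ∑ i, C * gT (αs i) := Finset.sum_le_sum fun i _ => hremb z (αs i)
  -- t6 : C*Q ≤ C*(2η)
  have hQ2 : C * Q ≤ C * (2*η) := by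
    apply mul_le_mul_of_nonneg_left ?_ hC0.le
    have h1 := (abs_lt.1 hgoodT).2
    linarith [hgTint]
  -- numeric facts
  have hCLRτ : C*L*R*τ = ε/16 := by
    rw [hτdef]
    field_simp [hC0.ne', hL0.ne', hR0.ne']
  have hCη : C*η = ε/16 := by
    rw [hηdef]
    field_simp [hC0.ne']
  -- assemble
  have hFIz : |F u - Ifull| < ε/4 := by
    have h := hFI u
    rw [← hzdef, ← hIfulldef] at h
    exact h
  have htri1 : |F u - Sful| ≤ |F u - Ifull| + |Ifull - Sful| := abs_sub_le _ _ _
  have htri2 : |Ifull - Sful| ≤ |Ifull - Ifz| + |Ifz - Sful| := abs_sub_le _ _ _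
  have htri3 : |Ifz - Sful| ≤ |Ifz - Ify| + |Ify - Sful| := abs_sub_le _ _ _
  have htri4 : |Ify - Sful| ≤ |Ify - Avgy| + |Avgy - Sful| := abs_sub_le _ _ _
  have htri5 : |Avgy - Sful| ≤ |Avgy - Avgz| + |Avgz - Sful| := abs_sub_le _ _ _
  have habs1 : |Ify - Avgy| = |Avgy - Ify| := abs_sub_comm _ _
  have habs2 : |Avgz - Sful| = |Sful - Avgz| := abs_sub_comm _ _
  have hgoal : (∑ i, B (αs i) / (M:ℝ) * ϕ ⟪αs i, z⟫) = Sful := by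
    rw [hSfuldef, Finset.sum_div]
    exact Finset.sum_congr rfl fun i _ => div_mul_eq_mul_div _ _ _
  show |F u - ∑ i, B (αs i) / (M:ℝ) * ϕ ⟪αs i, z⟫| < ε
  rw [hgoal]
  have htcε : tc = ε/8 := htcdef
  linarith [hFIz, ht1, ht2, ht4, ht5, hQ2, hgood1, htri1, htri2, htri3, htri4, htri5,
    habs1, habs2, hCLRτ, hCη, hε]
end
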